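/- arXiv:1805.04852 — 5 statements merged into one kernel-verified Lean document; each statement's English description precedes it below -/
import Mathlib

section
/- For any set 𝕊 of 2-systems and any set ℍ of hypersequent rules such that for every Sys ∈ 𝕊 the corresponding hypersequent rule Hr_Sys belongs to ℍ: if a sequent Γ ⇒ Π is derivable in LJ + 𝕊, then Γ ⇒ Π is derivable in HLJ + ℍ. -/
/- Formulas of intuitionistic propositional logic -/
inductive Formula : Type
  | atom : ℕ → Formula
  | bot  : Formula
  | conj : Formula → Formula → Formula
  | disj : Formula → Formula → Formula
  | impl : Formula → Formula → Formula

/-- A sequent Γ ⇒ Π. -/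
abbrev Sequent : Type := Multiset Formula × Option Formula

/-- A hypersequent. -/
abbrev Hyper : Type := Multiset Sequent

/-- A (schematic) top rule of a 2-system: it infers Σ₀, Γ' ⇒ Π' from
Σ₁, Γ' ⇒ Π', …, Σₙ, Γ' ⇒ Π' for the fixed multisets Σ₀, Σ₁, …, Σₙ
(`concl` is Σ₀ and `prems` the list Σ₁, …, Σₙ), where Γ', Π' are arbitrary. -/
structure TopRule : Type where
  concl : Multiset Formula
  prems : List (Multiset Formula)

/-- A two-level system of rules (2-system), given by its list of top rules
r₁, …, rₖ; its bottom rule infers Γ ⇒ Π from k premisses Γ ⇒ Π where the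
derivation of the i-th premiss may use the top rule rᵢ. -/
structure TwoSystem : Type where
  tops : List TopRule

/-- A hypersequent rule: its conclusion is
G | θ₁¹,…,θ₁ⁿ¹, Γ₁ ⇒ Π₁ | … | θₖ¹,…,θₖⁿᵏ, Γₖ ⇒ Πₖ and its premisses are,
for each component i, the hypersequents G | Σ, Γᵢ ⇒ Πᵢ for Σ among the
premiss-multisets of the i-th component. -/
structure HypRule : Type where
  comps : List TopRule

/-- The hypersequent rule `Hr_Sys` corresponding to a 2-system `Sys`. -/
def hrOfSys (sys : TwoSystem) : HypRule := ⟨sys.tops⟩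

/-- Derivability in LJ + 𝕊, where the auxiliary parameter `T` records the top
rules currently enabled (by bottom rules applied below).  `⊢_{LJ+𝕊} s` is
`SDer S ∅ s`.  The constructor `bot` is the bottom rule of a 2-system in `S`:
it has one premiss Γ ⇒ Π for each top rule rᵢ of the 2-system, and in the
derivation of the i-th premiss the top rule rᵢ may (also) be applied;
the constructor `top` applies an enabled top rule. -/
inductive SDer (S : Set TwoSystem) : Set TopRule → Sequent → Prop
  | ax (T) (φ : Formula) : SDer S T ({φ}, some φ)
  | botL (T) (Δ : Option Formula) : SDer S T ({Formula.bot}, Δ)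
  | disjL {T} {Γ : Multiset Formula} {Δ : Option Formula} (φ ψ : Formula) :
      SDer S T (φ ::ₘ Γ, Δ) → SDer S T (ψ ::ₘ Γ, Δ) →
      SDer S T (Formula.disj φ ψ ::ₘ Γ, Δ)
  | disjR1 {T} {Γ : Multiset Formula} (φ ψ : Formula) :
      SDer S T (Γ, some φ) → SDer S T (Γ, some (Formula.disj φ ψ))
  | disjR2 {T} {Γ : Multiset Formula} (φ ψ : Formula) :
      SDer S T (Γ, some ψ) → SDer S T (Γ, some (Formula.disj φ ψ))
  | conjL {T} {Γ : Multiset Formula} {Δ : Option Formula} (φ ψ : Formula) :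
      SDer S T (φ ::ₘ ψ ::ₘ Γ, Δ) → SDer S T (Formula.conj φ ψ ::ₘ Γ, Δ)
  | conjR {T} {Γ : Multiset Formula} (φ ψ : Formula) :
      SDer S T (Γ, some φ) → SDer S T (Γ, some ψ) →
      SDer S T (Γ, some (Formula.conj φ ψ))
  | implL {T} {Γ : Multiset Formula} {Δ : Option Formula} (φ ψ : Formula) :
      SDer S T (Γ, some φ) → SDer S T (ψ ::ₘ Γ, Δ) →
      SDer S T (Formula.impl φ ψ ::ₘ Γ, Δ)
  | implR {T} {Γ : Multiset Formula} (φ ψ : Formula) :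
      SDer S T (φ ::ₘ Γ, some ψ) → SDer S T (Γ, some (Formula.impl φ ψ))
  | iw {T} {Γ : Multiset Formula} {Δ : Option Formula} (φ : Formula) :
      SDer S T (Γ, Δ) → SDer S T (φ ::ₘ Γ, Δ)
  | ic {T} {Γ : Multiset Formula} {Δ : Option Formula} (φ : Formula) :
      SDer S T (φ ::ₘ φ ::ₘ Γ, Δ) → SDer S T (φ ::ₘ Γ, Δ)
  | cut {T} {Γ Γ' : Multiset Formula} {Δ : Option Formula} (φ : Formula) :
      SDer S T (Γ, some φ) → SDer S T (φ ::ₘ Γ', Δ) → SDer S T (Γ + Γ', Δ)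
  | top {T} (t : TopRule) (ht : t ∈ T) (Γ' : Multiset Formula) (Δ' : Option Formula) :
      (∀ p ∈ t.prems, SDer S T (p + Γ', Δ')) → SDer S T (t.concl + Γ', Δ')
  | bot {T} (sys : TwoSystem) (hs : sys ∈ S) (Γ : Multiset Formula) (Δ : Option Formula) :
      (∀ t ∈ sys.tops, SDer S (insert t T) (Γ, Δ)) → SDer S T (Γ, Δ)

/-- Derivability in HLJ + ℍ for a set ℍ of hypersequent rules: the rules of
HLJ (each LJ rule with a hypersequent context G, plus external weakening and
external contraction) together with the rules of ℍ; an instance of a rule of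
ℍ is given by the shared context G and a context Γᵢ ⇒ Πᵢ for each of its
components. -/
inductive HDer (Hs : Set HypRule) : Hyper → Prop
  | ax (φ : Formula) : HDer Hs {(({φ} : Multiset Formula), some φ)}
  | botL (Δ : Option Formula) : HDer Hs {(({Formula.bot} : Multiset Formula), Δ)}
  | disjL {G : Hyper} {Γ : Multiset Formula} {Δ : Option Formula} (φ ψ : Formula) :
      HDer Hs ((φ ::ₘ Γ, Δ) ::ₘ G) → HDer Hs ((ψ ::ₘ Γ, Δ) ::ₘ G) →
      HDer Hs ((Formula.disj φ ψ ::ₘ Γ, Δ) ::ₘ G)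
  | disjR1 {G : Hyper} {Γ : Multiset Formula} (φ ψ : Formula) :
      HDer Hs ((Γ, some φ) ::ₘ G) → HDer Hs ((Γ, some (Formula.disj φ ψ)) ::ₘ G)
  | disjR2 {G : Hyper} {Γ : Multiset Formula} (φ ψ : Formula) :
      HDer Hs ((Γ, some ψ) ::ₘ G) → HDer Hs ((Γ, some (Formula.disj φ ψ)) ::ₘ G)
  | conjL {G : Hyper} {Γ : Multiset Formula} {Δ : Option Formula} (φ ψ : Formula) :
      HDer Hs ((φ ::ₘ ψ ::ₘ Γ, Δ) ::ₘ G) → HDer Hs ((Formula.conj φ ψ ::ₘ Γ, Δ) ::ₘ G)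
  | conjR {G : Hyper} {Γ : Multiset Formula} (φ ψ : Formula) :
      HDer Hs ((Γ, some φ) ::ₘ G) → HDer Hs ((Γ, some ψ) ::ₘ G) →
      HDer Hs ((Γ, some (Formula.conj φ ψ)) ::ₘ G)
  | implL {G : Hyper} {Γ : Multiset Formula} {Δ : Option Formula} (φ ψ : Formula) :
      HDer Hs ((Γ, some φ) ::ₘ G) → HDer Hs ((ψ ::ₘ Γ, Δ) ::ₘ G) →
      HDer Hs ((Formula.impl φ ψ ::ₘ Γ, Δ) ::ₘ G)
  | implR {G : Hyper} {Γ : Multiset Formula} (φ ψ : Formula) :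
      HDer Hs ((φ ::ₘ Γ, some ψ) ::ₘ G) → HDer Hs ((Γ, some (Formula.impl φ ψ)) ::ₘ G)
  | iw {G : Hyper} {Γ : Multiset Formula} {Δ : Option Formula} (φ : Formula) :
      HDer Hs ((Γ, Δ) ::ₘ G) → HDer Hs ((φ ::ₘ Γ, Δ) ::ₘ G)
  | ic {G : Hyper} {Γ : Multiset Formula} {Δ : Option Formula} (φ : Formula) :
      HDer Hs ((φ ::ₘ φ ::ₘ Γ, Δ) ::ₘ G) → HDer Hs ((φ ::ₘ Γ, Δ) ::ₘ G)
  | cut {G : Hyper} {Γ Γ' : Multiset Formula} {Δ : Option Formula} (φ : Formula) :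
      HDer Hs ((Γ, some φ) ::ₘ G) → HDer Hs ((φ ::ₘ Γ', Δ) ::ₘ G) →
      HDer Hs ((Γ + Γ', Δ) ::ₘ G)
  | ew {G : Hyper} (s : Sequent) : HDer Hs G → HDer Hs (s ::ₘ G)
  | ec {G : Hyper} (s : Sequent) : HDer Hs (s ::ₘ s ::ₘ G) → HDer Hs (s ::ₘ G)
  | ext (hr : HypRule) (hmem : hr ∈ Hs) (G : Hyper)
      (ctx : List (Multiset Formula × Option Formula))
      (hlen : ctx.length = hr.comps.length)
      (hprem : ∀ pr ∈ hr.comps.zip ctx, ∀ p ∈ pr.1.prems,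
        HDer Hs ((p + pr.2.1, pr.2.2) ::ₘ G)) :
      HDer Hs ((((hr.comps.zip ctx).map fun pr => (pr.1.concl + pr.2.1, pr.2.2) :
        List Sequent) : Multiset Sequent) + G)

/-! ### Auxiliary material for the proof of `sys_to_hyp` -/

/-- Conjunction of a list of formulas (empty list: ⊤ := ⊥ → ⊥). -/
def bigConj : List Formula → Formula
  | [] => Formula.impl Formula.bot Formula.bot
  | a :: l => Formula.conj a (bigConj l)

/-- Disjunction of a list of formulas (empty list: ⊥). -/
def bigDisj : List Formula → Formula
  | [] => Formula.bot
  | a :: l => Formula.disj a (bigDisj l)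

/-- Conjunction of a multiset of formulas. -/
noncomputable def cnjM (m : Multiset Formula) : Formula := bigConj m.toList

/-- The disjunction of the conjunctions of the premiss-multisets of a top rule. -/
noncomputable def dsjR (t : TopRule) : Formula := bigDisj (t.prems.map cnjM)

/-- The formula corresponding to a top rule. -/
noncomputable def Ft (t : TopRule) : Formula := Formula.impl (cnjM t.concl) (dsjR t)

section Aux

variable {Hs : Set HypRule}

lemma hder_add (G : Hyper) {H : Hyper} (h : HDer Hs H) : HDer Hs (G + H) := by
  induction G using Multiset.induction with
  | empty => simpa using h
  | cons a G ih => rw [Multiset.cons_add]; exact HDer.ew a ih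

lemma hder_iwM {X : Multiset Formula} {Δ : Option Formula} {G : Hyper}
    (Y : Multiset Formula) (h : HDer Hs ((X, Δ) ::ₘ G)) : HDer Hs ((Y + X, Δ) ::ₘ G) := by
  induction Y using Multiset.induction with
  | empty => simpa using h
  | cons a Y ih => rw [Multiset.cons_add]; exact HDer.iw a ih

lemma hder_icM {X : Multiset Formula} {Δ : Option Formula} {G : Hyper}
    (Y : Multiset Formula) (h : HDer Hs ((Y + (Y + X), Δ) ::ₘ G)) :
    HDer Hs ((Y + X, Δ) ::ₘ G) := by
  induction Y using Multiset.induction generalizing X with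
  | empty => simpa using h
  | cons a Y ih =>
    have e : (a ::ₘ Y) + ((a ::ₘ Y) + X) = a ::ₘ a ::ₘ (Y + (Y + X)) := by
      simp only [← Multiset.singleton_add]; abel
    rw [e] at h
    have h2 := HDer.ic a h
    have e2 : a ::ₘ (Y + (Y + X)) = Y + (Y + (a ::ₘ X)) := by
      simp only [← Multiset.singleton_add]; abel
    rw [e2] at h2
    have h3 := ih h2
    have e3 : Y + (a ::ₘ X) = (a ::ₘ Y) + X := by
      simp only [← Multiset.singleton_add]; abel
    rwa [e3] at h3

lemma hder_ax_mem {X : Multiset Formula} {G : Hyper} {φ : Formula} (h : φ ∈ X) :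
    HDer Hs ((X, some φ) ::ₘ G) := by
  obtain ⟨X', rfl⟩ := Multiset.exists_cons_of_mem h
  have h0 : HDer Hs ((({φ} : Multiset Formula), some φ) ::ₘ G) := by
    have := hder_add (Hs := Hs) G (HDer.ax φ)
    rwa [add_comm, Multiset.singleton_add] at this
  have := hder_iwM X' h0
  have e : X' + ({φ} : Multiset Formula) = φ ::ₘ X' := by
    rw [add_comm, Multiset.singleton_add]
  rwa [e] at this

lemma hder_botL_mem {X : Multiset Formula} {Δ : Option Formula} {G : Hyper}
    (h : Formula.bot ∈ X) : HDer Hs ((X, Δ) ::ₘ G) := by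
  obtain ⟨X', rfl⟩ := Multiset.exists_cons_of_mem h
  have h0 : HDer Hs ((({Formula.bot} : Multiset Formula), Δ) ::ₘ G) := by
    have := hder_add (Hs := Hs) G (HDer.botL Δ)
    rwa [add_comm, Multiset.singleton_add] at this
  have := hder_iwM X' h0
  have e : X' + ({Formula.bot} : Multiset Formula) = Formula.bot ::ₘ X' := by
    rw [add_comm, Multiset.singleton_add]
  rwa [e] at this

lemma hder_bigConj : ∀ (L : List Formula) {X : Multiset Formula} {G : Hyper},
    (↑L : Multiset Formula) ≤ X → HDer Hs ((X, some (bigConj L)) ::ₘ G)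
  | [], X, G, _ => by
    apply HDer.implR
    exact hder_botL_mem (Multiset.mem_cons_self _ _)
  | a :: L, X, G, hL => by
    refine HDer.conjR _ _ (hder_ax_mem ?_) (hder_bigConj L ?_)
    · exact Multiset.mem_of_le hL (by simp)
    · refine le_trans ?_ hL
      rw [← Multiset.cons_coe]
      exact Multiset.le_cons_self _ _

lemma hder_conjL_fold : ∀ (L : List Formula) {X : Multiset Formula} {Δ : Option Formula}
    {G : Hyper}, HDer Hs (((↑L : Multiset Formula) + X, Δ) ::ₘ G) →
    HDer Hs ((bigConj L ::ₘ X, Δ) ::ₘ G)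
  | [], X, Δ, G, h => by
    apply HDer.iw
    simpa using h
  | a :: L, X, Δ, G, h => by
    apply HDer.conjL
    have e : ((↑(a :: L) : Multiset Formula) + X) = (↑L : Multiset Formula) + (a ::ₘ X) := by
      rw [← Multiset.cons_coe]
      simp only [← Multiset.singleton_add]; abel
    rw [e] at h
    have := hder_conjL_fold L h
    rwa [Multiset.cons_swap] at this

lemma hder_bigDisj_of_mem : ∀ (M : List Formula) {m : Formula} {X : Multiset Formula}
    {G : Hyper}, m ∈ M → HDer Hs ((X, some m) ::ₘ G) →
    HDer Hs ((X, some (bigDisj M)) ::ₘ G)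
  | [], m, X, G, hm, _ => absurd hm List.not_mem_nil
  | a :: M, m, X, G, hm, h => by
    rcases List.mem_cons.1 hm with rfl | hm
    · exact HDer.disjR1 _ _ h
    · exact HDer.disjR2 _ _ (hder_bigDisj_of_mem M hm h)

lemma hder_bigDisjL : ∀ (M : List Formula) {X : Multiset Formula} {Δ : Option Formula}
    {G : Hyper}, (∀ m ∈ M, HDer Hs ((m ::ₘ X, Δ) ::ₘ G)) →
    HDer Hs ((bigDisj M ::ₘ X, Δ) ::ₘ G)
  | [], X, Δ, G, _ => hder_botL_mem (Multiset.mem_cons_self _ _)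
  | a :: M, X, Δ, G, h =>
    HDer.disjL _ _ (h a (by simp)) (hder_bigDisjL M fun m hm => h m (by simp [hm]))

lemma hder_mapTrans (f g : TopRule → Sequent)
    (hfg : ∀ t, ∀ G' : Hyper, HDer Hs (f t ::ₘ G') → HDer Hs (g t ::ₘ G')) :
    ∀ (L : List TopRule) (G : Hyper),
      HDer Hs ((↑(L.map f) : Hyper) + G) → HDer Hs ((↑(L.map g) : Hyper) + G)
  | [], G, h => by simpa using h
  | t :: L, G, h => by
    have h1 : HDer Hs (f t ::ₘ ((↑(L.map f) : Hyper) + G)) := by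
      rw [← Multiset.cons_add, Multiset.cons_coe]
      simpa using h
    have h2 := hfg t _ h1
    have e : (g t ::ₘ ((↑(L.map f) : Hyper) + G)) = (↑(L.map f) : Hyper) + (g t ::ₘ G) := by
      simp only [← Multiset.singleton_add]; abel
    rw [e] at h2
    have h3 := hder_mapTrans f g hfg L (g t ::ₘ G) h2
    have e2 : (↑(L.map g) : Hyper) + (g t ::ₘ G) = (↑((t :: L).map g) : Hyper) + G := by
      rw [List.map_cons, ← Multiset.cons_coe]
      simp only [← Multiset.singleton_add]; abel
    rwa [e2] at h3

lemma zip_map_self {α β : Type*} (f : α → β) :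
    ∀ (L : List α), L.zip (L.map f) = L.map (fun a => (a, f a))
  | [] => rfl
  | a :: L => by simp [zip_map_self f L]

lemma hder_cutFold (s : Multiset Formula) (Δ : Option Formula) :
    ∀ (L : List TopRule),
      (∀ t ∈ L, ∀ G' : Hyper, HDer Hs ((Ft t ::ₘ s, Δ) ::ₘ G')) →
      ∀ G : Hyper,
        HDer Hs ((↑(L.map fun t => ((0 : Multiset Formula), some (Ft t))) : Hyper) + G) →
        HDer Hs ((s, Δ) ::ₘ G)
  | [], _, G, h => HDer.ew _ (by simpa using h)
  | t :: L, hd, G, h => by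
    set C : Hyper := (↑(L.map fun t => ((0 : Multiset Formula), some (Ft t))) : Hyper) + G
      with hC
    have h1 : HDer Hs ((((0 : Multiset Formula)), some (Ft t)) ::ₘ C) := by
      rw [hC, ← Multiset.cons_add, Multiset.cons_coe]
      simpa using h
    have h2 := hd t (by simp) C
    have h3 := HDer.cut (Ft t) h1 h2
    rw [zero_add] at h3
    have e : (s, Δ) ::ₘ C
        = (↑(L.map fun t => ((0 : Multiset Formula), some (Ft t))) : Hyper) + ((s, Δ) ::ₘ G) := by
      rw [hC]; simp only [← Multiset.singleton_add]; abel
    rw [e] at h3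
    have h4 := hder_cutFold s Δ L (fun u hu => hd u (by simp [hu])) ((s, Δ) ::ₘ G) h3
    exact HDer.ec _ h4

lemma hder_axioms {S : Set TwoSystem} (hSH : ∀ sys ∈ S, hrOfSys sys ∈ Hs)
    {sys : TwoSystem} (hs : sys ∈ S) (G : Hyper) :
    HDer Hs ((↑(sys.tops.map fun t => ((0 : Multiset Formula), some (Ft t))) : Hyper) + G) := by
  have hprem : ∀ pr ∈ (hrOfSys sys).comps.zip
      (sys.tops.map fun t => ((0 : Multiset Formula), some (dsjR t))),
      ∀ p ∈ pr.1.prems, HDer Hs ((p + pr.2.1, pr.2.2) ::ₘ G) := by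
    intro pr hpr p hp
    rw [show (hrOfSys sys).comps = sys.tops from rfl, zip_map_self] at hpr
    obtain ⟨t, ht, rfl⟩ := List.mem_map.1 hpr
    rw [add_zero]
    exact hder_bigDisj_of_mem _ (List.mem_map_of_mem (f := cnjM) hp)
      (hder_bigConj _ (by rw [Multiset.coe_toList]))
  have hext := HDer.ext (hrOfSys sys) (hSH sys hs) G
      (sys.tops.map fun t => ((0 : Multiset Formula), some (dsjR t)))
      (by simp [hrOfSys]) hprem
  rw [show (hrOfSys sys).comps = sys.tops from rfl, zip_map_self, List.map_map] at hext
  refine hder_mapTrans (fun t => (t.concl + 0, some (dsjR t)))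
    (fun t => ((0 : Multiset Formula), some (Ft t))) ?_ sys.tops G hext
  intro t G' h
  show HDer Hs (((0 : Multiset Formula), some (Formula.impl (cnjM t.concl) (dsjR t))) ::ₘ G')
  apply HDer.implR
  apply hder_conjL_fold t.concl.toList
  rw [Multiset.coe_toList, add_zero]
  simpa using h

lemma sder_main {S : Set TwoSystem} (hSH : ∀ sys ∈ S, hrOfSys sys ∈ Hs) :
    ∀ {T : Set TopRule} {s : Sequent}, SDer S T s →
      ∀ Φ : Multiset Formula, (∀ t ∈ T, Ft t ∈ Φ) →
      ∀ G : Hyper, HDer Hs ((s.1 + Φ, s.2) ::ₘ G) := by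
  intro T s h
  induction h with
  | ax T φ =>
    intro Φ _ G
    exact hder_ax_mem (by simp)
  | botL T Δ =>
    intro Φ _ G
    exact hder_botL_mem (by simp)
  | disjL φ ψ h1 h2 ih1 ih2 =>
    intro Φ hΦ G
    simp only [Multiset.cons_add]
    exact HDer.disjL φ ψ (by simpa [Multiset.cons_add] using ih1 Φ hΦ G)
      (by simpa [Multiset.cons_add] using ih2 Φ hΦ G)
  | disjR1 φ ψ h1 ih1 =>
    intro Φ hΦ G
    exact HDer.disjR1 φ ψ (ih1 Φ hΦ G)
  | disjR2 φ ψ h1 ih1 =>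
    intro Φ hΦ G
    exact HDer.disjR2 φ ψ (ih1 Φ hΦ G)
  | conjL φ ψ h1 ih1 =>
    intro Φ hΦ G
    simp only [Multiset.cons_add]
    exact HDer.conjL φ ψ (by simpa [Multiset.cons_add] using ih1 Φ hΦ G)
  | conjR φ ψ h1 h2 ih1 ih2 =>
    intro Φ hΦ G
    exact HDer.conjR φ ψ (ih1 Φ hΦ G) (ih2 Φ hΦ G)
  | implL φ ψ h1 h2 ih1 ih2 =>
    intro Φ hΦ G
    simp only [Multiset.cons_add]
    exact HDer.implL φ ψ (ih1 Φ hΦ G) (by simpa [Multiset.cons_add] using ih2 Φ hΦ G)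
  | implR φ ψ h1 ih1 =>
    intro Φ hΦ G
    exact HDer.implR φ ψ (by simpa [Multiset.cons_add] using ih1 Φ hΦ G)
  | iw φ h1 ih1 =>
    intro Φ hΦ G
    simp only [Multiset.cons_add]
    exact HDer.iw φ (ih1 Φ hΦ G)
  | ic φ h1 ih1 =>
    intro Φ hΦ G
    simp only [Multiset.cons_add]
    exact HDer.ic φ (by simpa [Multiset.cons_add] using ih1 Φ hΦ G)
  | cut φ h1 h2 ih1 ih2 =>
    intro Φ hΦ G
    rename_i T Γ Γ' Δ
    have hc := HDer.cut φ (ih1 Φ hΦ G) (by simpa [Multiset.cons_add] using ih2 Φ hΦ G)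
    have e : (Γ + Φ) + (Γ' + Φ) = Φ + (Φ + (Γ + Γ')) := by abel
    rw [e] at hc
    have := hder_icM Φ hc
    rwa [add_comm] at this
  | top t ht Γ' Δ' hp ih =>
    intro Φ hΦ G
    obtain ⟨Φ', rfl⟩ := Multiset.exists_cons_of_mem (hΦ t ht)
    have e : (t.concl + Γ') + (Ft t ::ₘ Φ') = Ft t ::ₘ (t.concl + Γ' + Φ') := by
      simp only [← Multiset.singleton_add]; abel
    show HDer Hs (((t.concl + Γ') + (Ft t ::ₘ Φ'), Δ') ::ₘ G)
    rw [e]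
    apply HDer.ic
    show HDer Hs ((Formula.impl (cnjM t.concl) (dsjR t) ::ₘ Ft t ::ₘ (t.concl + Γ' + Φ'), Δ')
      ::ₘ G)
    apply HDer.implL
    · apply hder_bigConj
      rw [Multiset.coe_toList]
      refine le_trans ?_ (Multiset.le_cons_self _ _)
      exact le_trans (Multiset.le_add_right _ _) (Multiset.le_add_right _ _)
    · apply hder_bigDisjL
      intro m hm
      obtain ⟨p, hp', rfl⟩ := List.mem_map.1 hm
      apply hder_conjL_fold p.toList
      rw [Multiset.coe_toList]
      have h0 := ih p hp' (Ft t ::ₘ Φ') hΦ G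
      have h1 := hder_iwM t.concl h0
      have e2 : t.concl + ((p + Γ') + (Ft t ::ₘ Φ')) = p + (Ft t ::ₘ (t.concl + Γ' + Φ')) := by
        simp only [← Multiset.singleton_add]; abel
      rwa [e2] at h1
  | bot sys hs Γ Δ hp ih =>
    intro Φ hΦ G
    refine hder_cutFold (Γ + Φ) Δ sys.tops ?_ G (hder_axioms hSH hs G)
    intro t ht G'
    have h0 := ih t ht (Ft t ::ₘ Φ) ?_ G'
    · have e : Γ + (Ft t ::ₘ Φ) = Ft t ::ₘ (Γ + Φ) := by
        simp only [← Multiset.singleton_add]; abel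
      rwa [e] at h0
    · intro u hu
      rcases Set.mem_insert_iff.1 hu with rfl | hu
      · exact Multiset.mem_cons_self _ _
      · exact Multiset.mem_cons_of_mem (hΦ u hu)

end Aux
/-- Theorem (2-systems to hypersequents): for any set 𝕊 of 2-systems and set
ℍ of hypersequent rules such that `Hr_Sys ∈ ℍ` whenever `Sys ∈ 𝕊`, if the
sequent Γ ⇒ Π is derivable in LJ + 𝕊, then it is derivable in HLJ + ℍ. -/
theorem sys_to_hyp (S : Set TwoSystem) (Hs : Set HypRule)
    (hSH : ∀ sys ∈ S, hrOfSys sys ∈ Hs)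
    (Γ : Multiset Formula) (Δ : Option Formula)
    (h : SDer S ∅ (Γ, Δ)) : HDer Hs {(Γ, Δ)} := by
  have := sder_main hSH h 0 (by simp) 0
  simpa using this
end

section
/- For any set ℍ of hypersequent rules and any set 𝕊 of 2-systems such that for every Hr ∈ ℍ the corresponding 2-system Sys_Hr belongs to 𝕊: if a sequent Γ ⇒ Π is derivable in HLJ + ℍ, then Γ ⇒ Π is derivable in LJ + 𝕊. -/
/-- The 2-system `Sys_Hr` corresponding to a hypersequent rule `Hr`: the
premisses linked to the i-th active component of the conclusion of `Hr`
become the premisses of the i-th top rule. -/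
def sysOfHr (hr : HypRule) : TwoSystem := ⟨hr.comps⟩

/-- Monotonicity of `SDer` in the set of enabled top rules. -/
lemma sder_mono {S : Set TwoSystem} {T T' : Set TopRule} {s : Sequent}
    (h : SDer S T s) (hT : T ⊆ T') : SDer S T' s := by
  induction h generalizing T' with
  | ax T φ => exact .ax _ φ
  | botL T Δ => exact .botL _ Δ
  | disjL φ ψ h1 h2 ih1 ih2 => exact .disjL φ ψ (ih1 hT) (ih2 hT)
  | disjR1 φ ψ h1 ih1 => exact .disjR1 φ ψ (ih1 hT)
  | disjR2 φ ψ h1 ih1 => exact .disjR2 φ ψ (ih1 hT)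
  | conjL φ ψ h1 ih1 => exact .conjL φ ψ (ih1 hT)
  | conjR φ ψ h1 h2 ih1 ih2 => exact .conjR φ ψ (ih1 hT) (ih2 hT)
  | implL φ ψ h1 h2 ih1 ih2 => exact .implL φ ψ (ih1 hT) (ih2 hT)
  | implR φ ψ h1 ih1 => exact .implR φ ψ (ih1 hT)
  | iw φ h1 ih1 => exact .iw φ (ih1 hT)
  | ic φ h1 ih1 => exact .ic φ (ih1 hT)
  | cut φ h1 h2 ih1 ih2 => exact .cut φ (ih1 hT) (ih2 hT)
  | top t ht Γ' Δ' hp ih => exact .top t (hT ht) Γ' Δ' (fun p hp' => ih p hp' hT)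
  | bot sys hs Γ Δ hp ih =>
      exact .bot sys hs Γ Δ (fun t htt => ih t htt (Set.insert_subset_insert hT))

/-- A "follower" for a component `s`: any derivation of `s` (at any larger set
of enabled top rules) yields a derivation of the target sequent. -/
def Fol (S : Set TwoSystem) (tgt : Sequent) (T : Set TopRule) (s : Sequent) : Prop :=
  ∀ T' : Set TopRule, T ⊆ T' → SDer S T' s → SDer S T' tgt

lemma unary_step {S : Set TwoSystem} {tgt c c' : Sequent} {G : Hyper}
    (rule : ∀ T : Set TopRule, SDer S T c' → SDer S T c)
    (ih : ∀ T : Set TopRule, (∀ s ∈ (c' ::ₘ G), Fol S tgt T s) → SDer S T tgt)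
    (T : Set TopRule) (F : ∀ s ∈ (c ::ₘ G), Fol S tgt T s) : SDer S T tgt := by
  apply ih T
  intro s hs
  rcases Multiset.mem_cons.mp hs with rfl | hsG
  · intro T₁ h₁ d₁
    exact F c (Multiset.mem_cons_self _ _) T₁ h₁ (rule T₁ d₁)
  · exact F s (Multiset.mem_cons_of_mem hsG)

lemma binary_step {S : Set TwoSystem} {tgt c c₁ c₂ : Sequent} {G : Hyper}
    (rule : ∀ T : Set TopRule, SDer S T c₁ → SDer S T c₂ → SDer S T c)
    (ih1 : ∀ T : Set TopRule, (∀ s ∈ (c₁ ::ₘ G), Fol S tgt T s) → SDer S T tgt)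
    (ih2 : ∀ T : Set TopRule, (∀ s ∈ (c₂ ::ₘ G), Fol S tgt T s) → SDer S T tgt)
    (T : Set TopRule) (F : ∀ s ∈ (c ::ₘ G), Fol S tgt T s) : SDer S T tgt := by
  apply ih1 T
  intro s hs
  rcases Multiset.mem_cons.mp hs with rfl | hsG
  · intro T₁ h₁ d₁
    apply ih2 T₁
    intro s hs
    rcases Multiset.mem_cons.mp hs with rfl | hsG
    · intro T₂ h₂ d₂
      exact F c (Multiset.mem_cons_self _ _) T₂ (h₁.trans h₂)
        (rule T₂ (sder_mono d₁ h₂) d₂)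
    · intro T₂ h₂ d₂
      exact F s (Multiset.mem_cons_of_mem hsG) T₂ ((h₁.trans h₂)) d₂
  · intro T₁ h₁ d₁
    exact F s (Multiset.mem_cons_of_mem hsG) T₁ h₁ d₁

/-- Chaining the premisses of a top rule. -/
lemma chain {S : Set TwoSystem} {tgt : Sequent} (Γi : Multiset Formula)
    (Δi : Option Formula) :
    ∀ (l : List (Multiset Formula)) (T : Set TopRule),
    (∀ p ∈ l, ∀ T₁ : Set TopRule, T ⊆ T₁ →
      Fol S tgt T₁ (p + Γi, Δi) → SDer S T₁ tgt) →
    (∀ T₁ : Set TopRule, T ⊆ T₁ →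
      (∀ p ∈ l, SDer S T₁ (p + Γi, Δi)) → SDer S T₁ tgt) →
    SDer S T tgt
  | [], T, _, done => done T subset_rfl (by simp)
  | p :: l, T, ihs, done => by
    apply ihs p List.mem_cons_self T subset_rfl
    intro T₂ h₂ d
    refine chain Γi Δi l T₂
      (fun q hq T₁ h₁ Fq => ihs q (List.mem_cons_of_mem _ hq) T₁ (h₂.trans h₁) Fq)
      (fun T₃ h₃ hall => done T₃ (h₂.trans h₃) ?_)
    intro q hq
    rcases List.mem_cons.mp hq with rfl | hq
    · exact sder_mono d h₃
    · exact hall q hq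

lemma key {Hs : Set HypRule} {S : Set TwoSystem}
    (hHS : ∀ hr ∈ Hs, sysOfHr hr ∈ S) (tgt : Sequent) {H : Hyper}
    (h : HDer Hs H) :
    ∀ T : Set TopRule, (∀ s ∈ H, Fol S tgt T s) → SDer S T tgt := by
  induction h with
  | ax φ =>
      intro T F
      exact F _ (Multiset.mem_singleton_self _) T subset_rfl (.ax T φ)
  | botL Δ =>
      intro T F
      exact F _ (Multiset.mem_singleton_self _) T subset_rfl (.botL T Δ)
  | disjL φ ψ h1 h2 ih1 ih2 =>
      exact binary_step (fun T d1 d2 => .disjL φ ψ d1 d2) ih1 ih2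
  | disjR1 φ ψ h1 ih1 => exact unary_step (fun T d => .disjR1 φ ψ d) ih1
  | disjR2 φ ψ h1 ih1 => exact unary_step (fun T d => .disjR2 φ ψ d) ih1
  | conjL φ ψ h1 ih1 => exact unary_step (fun T d => .conjL φ ψ d) ih1
  | conjR φ ψ h1 h2 ih1 ih2 =>
      exact binary_step (fun T d1 d2 => .conjR φ ψ d1 d2) ih1 ih2
  | implL φ ψ h1 h2 ih1 ih2 =>
      exact binary_step (fun T d1 d2 => .implL φ ψ d1 d2) ih1 ih2
  | implR φ ψ h1 ih1 => exact unary_step (fun T d => .implR φ ψ d) ih1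
  | iw φ h1 ih1 => exact unary_step (fun T d => .iw φ d) ih1
  | ic φ h1 ih1 => exact unary_step (fun T d => .ic φ d) ih1
  | cut φ h1 h2 ih1 ih2 =>
      exact binary_step (fun T d1 d2 => .cut φ d1 d2) ih1 ih2
  | ew s h1 ih1 =>
      intro T F
      exact ih1 T (fun x hx => F x (Multiset.mem_cons_of_mem hx))
  | ec s h1 ih1 =>
      intro T F
      apply ih1 T
      intro x hx
      rcases Multiset.mem_cons.mp hx with rfl | hx
      · exact F x (Multiset.mem_cons_self _ _)
      · rcases Multiset.mem_cons.mp hx with rfl | hx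
        · exact F x (Multiset.mem_cons_self _ _)
        · exact F x (Multiset.mem_cons_of_mem hx)
  | ext hr hmem G ctx hlen hprem ih =>
      intro T F
      refine SDer.bot (sysOfHr hr) (hHS hr hmem) tgt.1 tgt.2 ?_
      intro t ht
      have ht' : t ∈ hr.comps := ht
      obtain ⟨i, hi, hEq⟩ := List.mem_iff_getElem.mp ht'
      have hi2 : i < ctx.length := by omega
      set c : Multiset Formula × Option Formula := ctx[i] with hc
      have hzip : (t, c) ∈ hr.comps.zip ctx := by
        have : (hr.comps.zip ctx)[i]'(by simp [List.length_zip]; omega) = (t, c) := by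
          simp [List.getElem_zip, hEq, hc]
        exact this ▸ List.getElem_mem _
      have hmemHc : (t.concl + c.1, c.2) ∈
          (((hr.comps.zip ctx).map fun pr => (pr.1.concl + pr.2.1, pr.2.2) :
            List Sequent) : Multiset Sequent) + G := by
        refine Multiset.mem_add.mpr (Or.inl ?_)
        rw [Multiset.mem_coe]
        exact List.mem_map.mpr ⟨(t, c), hzip, rfl⟩
      have goal : SDer S (insert t T) tgt := by
        refine chain c.1 c.2 t.prems (insert t T) ?_ ?_
        · intro p hp T₁ h₁ Fp
          apply ih (t, c) hzip p hp T₁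
          intro s hs
          rcases Multiset.mem_cons.mp hs with rfl | hsG
          · exact Fp
          · intro T' h' d'
            exact F s (Multiset.mem_add.mpr (Or.inr hsG)) T'
              (((Set.subset_insert t T).trans h₁).trans h') d'
        · intro T₁ h₁ hall
          exact F (t.concl + c.1, c.2) hmemHc T₁ ((Set.subset_insert t T).trans h₁)
            (SDer.top t (h₁ (Set.mem_insert t T)) c.1 c.2 hall)
      exact goal

/-- Theorem (hypersequents to 2-systems): for any set ℍ of hypersequent rules
and set 𝕊 of 2-systems such that `Sys_Hr ∈ 𝕊` whenever `Hr ∈ ℍ`, if the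
sequent Γ ⇒ Π is derivable in HLJ + ℍ, then it is derivable in LJ + 𝕊. -/
theorem hyp_to_sys (Hs : Set HypRule) (S : Set TwoSystem)
    (hHS : ∀ hr ∈ Hs, sysOfHr hr ∈ S)
    (Γ : Multiset Formula) (Δ : Option Formula)
    (h : HDer Hs {(Γ, Δ)}) : SDer S ∅ (Γ, Δ) := by
  exact key hHS (Γ, Δ) h ∅
    (fun s hs T' _ d => by rwa [Multiset.mem_singleton.mp hs] at d)
end

section
/- Any derivation in LJ extended with 2-systems can be transformed into a derivation of the same end-sequent, in the same calculus, in which two applications of a top rule belonging to the same 2-system instance never occur on the same path (branch) of the derivation tree. -/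
/-- The rules of LJ, as a relation between the list of premisses and the
conclusion. -/
inductive LJRule : List Sequent → Sequent → Prop
  | ax (φ : Formula) : LJRule [] ({φ}, some φ)
  | botL (Δ : Option Formula) : LJRule [] ({Formula.bot}, Δ)
  | disjL {Γ : Multiset Formula} {Δ : Option Formula} (φ ψ : Formula) :
      LJRule [(φ ::ₘ Γ, Δ), (ψ ::ₘ Γ, Δ)] (Formula.disj φ ψ ::ₘ Γ, Δ)
  | disjR1 {Γ : Multiset Formula} (φ ψ : Formula) :
      LJRule [(Γ, some φ)] (Γ, some (Formula.disj φ ψ))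
  | disjR2 {Γ : Multiset Formula} (φ ψ : Formula) :
      LJRule [(Γ, some ψ)] (Γ, some (Formula.disj φ ψ))
  | conjL {Γ : Multiset Formula} {Δ : Option Formula} (φ ψ : Formula) :
      LJRule [(φ ::ₘ ψ ::ₘ Γ, Δ)] (Formula.conj φ ψ ::ₘ Γ, Δ)
  | conjR {Γ : Multiset Formula} (φ ψ : Formula) :
      LJRule [(Γ, some φ), (Γ, some ψ)] (Γ, some (Formula.conj φ ψ))
  | implL {Γ : Multiset Formula} {Δ : Option Formula} (φ ψ : Formula) :
      LJRule [(Γ, some φ), (ψ ::ₘ Γ, Δ)] (Formula.impl φ ψ ::ₘ Γ, Δ)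
  | implR {Γ : Multiset Formula} (φ ψ : Formula) :
      LJRule [(φ ::ₘ Γ, some ψ)] (Γ, some (Formula.impl φ ψ))
  | iw {Γ : Multiset Formula} {Δ : Option Formula} (φ : Formula) :
      LJRule [(Γ, Δ)] (φ ::ₘ Γ, Δ)
  | ic {Γ : Multiset Formula} {Δ : Option Formula} (φ : Formula) :
      LJRule [(φ ::ₘ φ ::ₘ Γ, Δ)] (φ ::ₘ Γ, Δ)
  | cut {Γ Γ' : Multiset Formula} {Δ : Option Formula} (φ : Formula) :
      LJRule [(Γ, some φ), (φ ::ₘ Γ', Δ)] (Γ + Γ', Δ)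

/-- Labels of rule applications in a 2-system derivation: an LJ rule, a top
rule application (tagged with the "level" of the bottom rule application it
belongs to, i.e. the number of bottom rules applied below the bottom rule of
its 2-system instance), or a bottom rule application of a 2-system. -/
inductive Lab : Type
  | lj : Lab
  | top : ℕ → Lab
  | bot : TwoSystem → Lab

/-- Derivation trees: a node carries a label, its conclusion sequent, and
the list of its immediate subderivations. -/
inductive DTree : Type
  | node : Lab → Sequent → List DTree → DTree

def DTree.lab : DTree → Lab
  | .node l _ _ => l

def DTree.concl : DTree → Sequent
  | .node _ s _ => s

def DTree.children : DTree → List DTree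
  | .node _ _ ts => ts

/-- `IsDeriv S ctx t` : `t` is a correct derivation in LJ extended with the
2-systems in `S`, where `ctx` lists the top rules enabled at the root
(`ctx.length` is the number of bottom rules applied below, and the top rule
at position `j` of `ctx` belongs to the 2-system instance whose bottom rule
was the (j+1)-st bottom rule encountered).  A genuine 2-system derivation of
a sequent is a tree `t` with `IsDeriv S [] t`, so that every top rule
application belongs to (occurs above a premiss of) the bottom rule of its
2-system instance. -/
inductive IsDeriv (S : Set TwoSystem) : List TopRule → DTree → Prop
  | lj {ctx : List TopRule} {s : Sequent} {ts : List DTree} :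
      LJRule (ts.map DTree.concl) s →
      (∀ u ∈ ts, IsDeriv S ctx u) →
      IsDeriv S ctx (DTree.node Lab.lj s ts)
  | top {ctx : List TopRule} (j : ℕ) (hj : j < ctx.length)
      (Γ' : Multiset Formula) (Δ' : Option Formula) {ts : List DTree} :
      ts.map DTree.concl = (ctx.get ⟨j, hj⟩).prems.map (fun p => (p + Γ', Δ')) →
      (∀ u ∈ ts, IsDeriv S ctx u) →
      IsDeriv S ctx (DTree.node (Lab.top j) ((ctx.get ⟨j, hj⟩).concl + Γ', Δ') ts)
  | bot {ctx : List TopRule} (sys : TwoSystem) (hs : sys ∈ S)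
      {s : Sequent} {ts : List DTree} :
      ts.length = sys.tops.length →
      (∀ u ∈ ts, u.concl = s) →
      (∀ p ∈ ts.zip sys.tops, IsDeriv S (ctx ++ [p.2]) p.1) →
      IsDeriv S ctx (DTree.node (Lab.bot sys) s ts)

/-- `Subtree u t` : `u` occurs as a subtree of `t`. -/
inductive Subtree : DTree → DTree → Prop
  | refl (t : DTree) : Subtree t t
  | child {u v : DTree} {l : Lab} {s : Sequent} {ts : List DTree} :
      u ∈ ts → Subtree v u → Subtree v (DTree.node l s ts)

/-! ### Auxiliary development -/

/-- No top-rule node anywhere in `t`. -/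
def NoTop (t : DTree) : Prop := ∀ u, Subtree u t → ∀ j, u.lab ≠ Lab.top j

/-- Every top-rule node of `t` has children containing no top-rule nodes. -/
def Good (t : DTree) : Prop :=
  ∀ u j, Subtree u t → u.lab = Lab.top j → ∀ c ∈ u.children, NoTop c

lemma subtree_node {v : DTree} {l : Lab} {s : Sequent} {ts : List DTree}
    (h : Subtree v (DTree.node l s ts)) :
    v = DTree.node l s ts ∨ ∃ u ∈ ts, Subtree v u := by
  cases h with
  | refl => exact Or.inl rfl
  | child hu hv => exact Or.inr ⟨_, hu, hv⟩

lemma noTop_node {l : Lab} {s : Sequent} {ts : List DTree}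
    (hl : ∀ j, l ≠ Lab.top j) (h : ∀ u ∈ ts, NoTop u) :
    NoTop (DTree.node l s ts) := by
  intro v hv j
  rcases subtree_node hv with rfl | ⟨u, hu, hvu⟩
  · exact hl j
  · exact h u hu v hvu j

lemma noTop_good {t : DTree} (h : NoTop t) : Good t := by
  intro u j hs hl
  exact absurd hl (h u hs j)

lemma good_node {l : Lab} {s : Sequent} {ts : List DTree}
    (hl : ∀ j, l ≠ Lab.top j) (h : ∀ u ∈ ts, Good u) :
    Good (DTree.node l s ts) := by
  intro u j hu hlab c hc
  rcases subtree_node hu with rfl | ⟨w, hw, huw⟩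
  · exact absurd hlab (hl j)
  · exact h w hw u j huw hlab c hc

lemma good_top {j : ℕ} {s : Sequent} {ts : List DTree}
    (h : ∀ u ∈ ts, NoTop u) :
    Good (DTree.node (Lab.top j) s ts) := by
  intro u j' hu hlab c hc
  rcases subtree_node hu with rfl | ⟨w, hw, huw⟩
  · exact h c hc
  · exact absurd hlab (h w hw u huw j')

/-- Pure-LJ derivations. -/
inductive LJD : DTree → Prop
  | node {s : Sequent} {ts : List DTree} :
      LJRule (ts.map DTree.concl) s → (∀ u ∈ ts, LJD u) →
      LJD (DTree.node Lab.lj s ts)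

lemma LJD.isDeriv {S : Set TwoSystem} {ctx : List TopRule} {t : DTree}
    (h : LJD t) : IsDeriv S ctx t := by
  induction h with
  | node hr _ ih => exact IsDeriv.lj hr ih

lemma LJD.noTop {t : DTree} (h : LJD t) : NoTop t := by
  induction h with
  | node hr hts ih => exact noTop_node (fun j h => by cases h) ih

/-- LJ provability. -/
def LProv (s : Sequent) : Prop := ∃ t, LJD t ∧ t.concl = s

lemma lp0 {s : Sequent} (hr : LJRule [] s) : LProv s :=
  ⟨.node .lj s [], .node hr (by simp), rfl⟩

lemma lp1 {s1 s : Sequent} (hr : LJRule [s1] s) (h1 : LProv s1) : LProv s := by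
  obtain ⟨t1, ht1, hc1⟩ := h1
  refine ⟨.node .lj s [t1], .node ?_ ?_, rfl⟩
  · rw [List.map_cons, List.map_nil, hc1]; exact hr
  · intro u hu; simp at hu; subst hu; exact ht1

lemma lp2 {s1 s2 s : Sequent} (hr : LJRule [s1, s2] s)
    (h1 : LProv s1) (h2 : LProv s2) : LProv s := by
  obtain ⟨t1, ht1, hc1⟩ := h1
  obtain ⟨t2, ht2, hc2⟩ := h2
  refine ⟨.node .lj s [t1, t2], .node ?_ ?_, rfl⟩
  · rw [List.map_cons, List.map_cons, List.map_nil, hc1, hc2]; exact hr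
  · intro u hu
    simp at hu
    rcases hu with rfl | rfl
    · exact ht1
    · exact ht2

lemma lp_weaken {Γ : Multiset Formula} {Δ : Option Formula}
    (Θ : Multiset Formula) (h : LProv (Γ, Δ)) : LProv (Θ + Γ, Δ) := by
  induction Θ using Multiset.induction_on with
  | empty => simpa using h
  | cons φ Θ ih =>
      rw [Multiset.cons_add]
      exact lp1 (LJRule.iw φ) ih

lemma lp_conj (L : List Formula) : LProv (↑L, some (bigConj L)) := by
  induction L with
  | nil =>
      have h1 : LProv ((Formula.bot ::ₘ 0 : Multiset Formula), some Formula.bot) := by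
        simpa using lp0 (LJRule.ax Formula.bot)
      have h2 := lp1 (LJRule.implR (Γ := 0) Formula.bot Formula.bot) h1
      simpa [bigConj] using h2
  | cons a L ih =>
      have h1 : LProv (a ::ₘ (↑L : Multiset Formula), some a) := by
        have := lp_weaken (Γ := {a}) (↑L : Multiset Formula) (lp0 (LJRule.ax a))
        rwa [add_comm, Multiset.singleton_add] at this
      have h2 : LProv (a ::ₘ (↑L : Multiset Formula), some (bigConj L)) := by
        have := lp_weaken (Γ := (↑L : Multiset Formula)) {a} ih
        rwa [Multiset.singleton_add] at this
      have h3 := lp2 (LJRule.conjR a (bigConj L)) h1 h2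
      simpa [bigConj] using h3

lemma lp_disj {φ : Formula} {Γ : Multiset Formula} :
    ∀ {Fs : List Formula}, φ ∈ Fs → LProv (Γ, some φ) →
      LProv (Γ, some (bigDisj Fs)) := by
  intro Fs
  induction Fs with
  | nil => intro h; cases h
  | cons a Fs ih =>
      intro hmem h
      rcases List.mem_cons.mp hmem with rfl | hmem'
      · exact lp1 (LJRule.disjR1 φ (bigDisj Fs)) h
      · exact lp1 (LJRule.disjR2 a (bigDisj Fs)) (ih hmem' h)

/-- Provability by a `Good` derivation. -/
def Prov (S : Set TwoSystem) (ctx : List TopRule) (s : Sequent) : Prop :=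
  ∃ t, IsDeriv S ctx t ∧ t.concl = s ∧ Good t

lemma lprov_notop {S : Set TwoSystem} {ctx : List TopRule} {s : Sequent}
    (h : LProv s) : ∃ t, IsDeriv S ctx t ∧ t.concl = s ∧ NoTop t := by
  obtain ⟨t, ht, hc⟩ := h
  exact ⟨t, ht.isDeriv, hc, ht.noTop⟩

lemma lp_prov {S : Set TwoSystem} {ctx : List TopRule} {s : Sequent}
    (h : LProv s) : Prov S ctx s := by
  obtain ⟨t, h1, h2, h3⟩ := lprov_notop (S := S) (ctx := ctx) h
  exact ⟨t, h1, h2, noTop_good h3⟩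

lemma prov1 {S : Set TwoSystem} {ctx : List TopRule} {s1 s : Sequent}
    (hr : LJRule [s1] s) (h1 : Prov S ctx s1) : Prov S ctx s := by
  obtain ⟨t1, ht1, hc1, hg1⟩ := h1
  refine ⟨.node .lj s [t1], IsDeriv.lj ?_ ?_, rfl, ?_⟩
  · rw [List.map_cons, List.map_nil, hc1]; exact hr
  · intro u hu; simp at hu; subst hu; exact ht1
  · refine good_node (fun j h => by cases h) ?_
    intro u hu; simp at hu; subst hu; exact hg1

lemma prov2 {S : Set TwoSystem} {ctx : List TopRule} {s1 s2 s : Sequent}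
    (hr : LJRule [s1, s2] s) (h1 : Prov S ctx s1) (h2 : Prov S ctx s2) :
    Prov S ctx s := by
  obtain ⟨t1, ht1, hc1, hg1⟩ := h1
  obtain ⟨t2, ht2, hc2, hg2⟩ := h2
  refine ⟨.node .lj s [t1, t2], IsDeriv.lj ?_ ?_, rfl, ?_⟩
  · rw [List.map_cons, List.map_cons, List.map_nil, hc1, hc2]; exact hr
  · intro u hu; simp at hu; rcases hu with rfl | rfl
    · exact ht1
    · exact ht2
  · refine good_node (fun j h => by cases h) ?_
    intro u hu; simp at hu; rcases hu with rfl | rfl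
    · exact hg1
    · exact hg2

lemma prov_bot {S : Set TwoSystem} {ctx : List TopRule}
    {Γ : Multiset Formula} {Δ : Option Formula} :
    Prov S ctx (Formula.bot ::ₘ Γ, Δ) := by
  apply lp_prov
  have := lp_weaken (Γ := {Formula.bot}) Γ (lp0 (LJRule.botL Δ))
  rwa [add_comm, Multiset.singleton_add] at this

lemma prov_conjL {S : Set TwoSystem} {ctx : List TopRule} {Δ : Option Formula} :
    ∀ (L : List Formula) (Γ : Multiset Formula),
      Prov S ctx (↑L + Γ, Δ) → Prov S ctx (bigConj L ::ₘ Γ, Δ) := by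
  intro L
  induction L with
  | nil =>
      intro Γ h
      exact prov1 (LJRule.iw _) (by simpa using h)
  | cons a L ih =>
      intro Γ h
      have h' : Prov S ctx (↑L + (a ::ₘ Γ), Δ) := by
        have e : (↑(a :: L) : Multiset Formula) + Γ = ↑L + (a ::ₘ Γ) := by
          rw [← Multiset.cons_coe, Multiset.cons_add, Multiset.add_cons]
        rwa [e] at h
      have h2 := ih (a ::ₘ Γ) h'
      have h3 : Prov S ctx (a ::ₘ bigConj L ::ₘ Γ, Δ) := by
        rwa [Multiset.cons_swap]
      exact prov1 (LJRule.conjL a (bigConj L)) h3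

lemma prov_disjL {S : Set TwoSystem} {ctx : List TopRule}
    {Γ : Multiset Formula} {Δ : Option Formula} :
    ∀ (ps : List (Multiset Formula)),
      (∀ p ∈ ps, Prov S ctx (p + Γ, Δ)) →
      Prov S ctx (bigDisj (ps.map fun p => bigConj p.toList) ::ₘ Γ, Δ) := by
  intro ps
  induction ps with
  | nil => intro _; exact prov_bot
  | cons p ps ih =>
      intro h
      have h1 : Prov S ctx (bigConj p.toList ::ₘ Γ, Δ) := by
        apply prov_conjL
        simpa [Multiset.coe_toList] using h p (List.mem_cons_self)
      have h2 := ih (fun q hq => h q (List.mem_cons_of_mem _ hq))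
      have e : bigDisj ((p :: ps).map fun q => bigConj q.toList) =
          Formula.disj (bigConj p.toList) (bigDisj (ps.map fun q => bigConj q.toList)) := rfl
      rw [e]
      exact prov2 (LJRule.disjL _ _) h1 h2

lemma choose_list {α : Type*} {P : DTree → α → Prop} :
    ∀ ps : List α, (∀ p ∈ ps, ∃ t, P t p) → ∃ ts, List.Forall₂ P ts ps := by
  intro ps
  induction ps with
  | nil => intro _; exact ⟨[], .nil⟩
  | cons p ps ih =>
      intro h
      obtain ⟨t, ht⟩ := h p (List.mem_cons_self)
      obtain ⟨ts, hts⟩ := ih (fun q hq => h q (List.mem_cons_of_mem _ hq))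
      exact ⟨t :: ts, .cons ht hts⟩

lemma forall₂_map {α : Type*} {P : DTree → α → Prop} {f : α → Sequent}
    (hP : ∀ t p, P t p → t.concl = f p) :
    ∀ {ts : List DTree} {ps : List α}, List.Forall₂ P ts ps →
      ts.map DTree.concl = ps.map f := by
  intro ts ps h
  induction h with
  | nil => rfl
  | cons h _ ih => simp [hP _ _ h, ih]

lemma forall₂_mem {α : Type*} {P : DTree → α → Prop} :
    ∀ {ts : List DTree} {ps : List α}, List.Forall₂ P ts ps →
      ∀ u ∈ ts, ∃ p ∈ ps, P u p := by
  intro ts ps h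
  induction h with
  | nil => intro u hu; cases hu
  | cons h _ ih =>
      intro u hu
      rcases List.mem_cons.mp hu with rfl | hu'
      · exact ⟨_, List.mem_cons_self, h⟩
      · obtain ⟨p, hp, hP⟩ := ih u hu'
        exact ⟨p, List.mem_cons_of_mem _ hp, hP⟩

lemma forall₂_zip {P : DTree → (DTree × TopRule) → Prop}
    {Q : DTree → TopRule → Prop} (hPQ : ∀ t p, P t p → Q t p.2) :
    ∀ {ts : List DTree} {qs : List (DTree × TopRule)}, List.Forall₂ P ts qs →
      ∀ pr ∈ ts.zip (qs.map Prod.snd), Q pr.1 pr.2 := by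
  intro ts qs h
  induction h with
  | nil => intro pr hpr; cases hpr
  | @cons t q ts qs h1 _ ih =>
      intro pr hpr
      rcases List.mem_cons.mp hpr with rfl | hpr'
      · exact hPQ t q h1
      · exact ih pr hpr'

lemma main_transform {S : Set TwoSystem} {ctx : List TopRule} {t : DTree}
    (h : IsDeriv S ctx t) :
    ∃ t', IsDeriv S ctx t' ∧ t'.concl = t.concl ∧ Good t' := by
  induction h with
  | lj hr hts ih =>
      rename_i ctx s ts
      obtain ⟨ts', hf⟩ := choose_list
        (P := fun t' u => IsDeriv S ctx t' ∧ t'.concl = u.concl ∧ Good t') ts ih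
      refine ⟨.node .lj s ts', IsDeriv.lj ?_ ?_, rfl, ?_⟩
      · rw [forall₂_map (fun t p h => h.2.1) hf]
        simpa using hr
      · intro u hu
        obtain ⟨p, _, hP⟩ := forall₂_mem hf u hu
        exact hP.1
      · refine good_node (fun j h => by cases h) ?_
        intro u hu
        obtain ⟨p, _, hP⟩ := forall₂_mem hf u hu
        exact hP.2.2
  | top j hj Γ' Δ' hmap hts ih =>
      rename_i ctx ts
      have hprem : ∀ p ∈ (ctx.get ⟨j, hj⟩).prems, Prov S ctx (p + Γ', Δ') := by
        intro p hp
        have hmem : ((p + Γ', Δ') : Sequent) ∈ ts.map DTree.concl := by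
          rw [hmap]; exact List.mem_map_of_mem hp
        obtain ⟨u, hu, hcu⟩ := List.mem_map.mp hmem
        obtain ⟨u', h1, h2, h3⟩ := ih u hu
        exact ⟨u', h1, by rw [h2, hcu], h3⟩
      have hB : Prov S ctx
          (bigDisj ((ctx.get ⟨j, hj⟩).prems.map fun p => bigConj p.toList) ::ₘ Γ', Δ') :=
        prov_disjL _ hprem
      obtain ⟨tB, hB1, hB2, hB3⟩ := hB
      have hAc : ∀ p ∈ (ctx.get ⟨j, hj⟩).prems, ∃ tp, IsDeriv S ctx tp ∧
          tp.concl = ((p + 0 : Multiset Formula),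
            some (bigDisj ((ctx.get ⟨j, hj⟩).prems.map fun p => bigConj p.toList))) ∧
          NoTop tp := by
        intro p hp
        apply lprov_notop
        have h1 : LProv (p, some (bigConj p.toList)) := by
          simpa [Multiset.coe_toList] using lp_conj p.toList
        have h2 := lp_disj (List.mem_map_of_mem (f := fun q : Multiset Formula => bigConj q.toList) hp) h1
        simpa using h2
      obtain ⟨tsA, hfA⟩ := choose_list _ hAc
      have hA1 : IsDeriv S ctx (DTree.node (Lab.top j)
          ((ctx.get ⟨j, hj⟩).concl + 0,
            some (bigDisj ((ctx.get ⟨j, hj⟩).prems.map fun p => bigConj p.toList))) tsA) := by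
        refine IsDeriv.top j hj 0 _ ?_ ?_
        · exact forall₂_map (fun t p h => h.2.1) hfA
        · intro u hu
          obtain ⟨p, _, hP⟩ := forall₂_mem hfA u hu
          exact hP.1
      have hA1' : IsDeriv S ctx (DTree.node (Lab.top j)
          ((ctx.get ⟨j, hj⟩).concl,
            some (bigDisj ((ctx.get ⟨j, hj⟩).prems.map fun p => bigConj p.toList))) tsA) := by
        simpa using hA1
      have hA3 : Good (DTree.node (Lab.top j)
          ((ctx.get ⟨j, hj⟩).concl + 0,
            some (bigDisj ((ctx.get ⟨j, hj⟩).prems.map fun p => bigConj p.toList))) tsA) := by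
        apply good_top
        intro u hu
        obtain ⟨p, _, hP⟩ := forall₂_mem hfA u hu
        exact hP.2.2
      have hA3' : Good (DTree.node (Lab.top j)
          ((ctx.get ⟨j, hj⟩).concl,
            some (bigDisj ((ctx.get ⟨j, hj⟩).prems.map fun p => bigConj p.toList))) tsA) := by
        simpa using hA3
      refine ⟨.node .lj ((ctx.get ⟨j, hj⟩).concl + Γ', Δ')
        [.node (Lab.top j) ((ctx.get ⟨j, hj⟩).concl,
          some (bigDisj ((ctx.get ⟨j, hj⟩).prems.map fun p => bigConj p.toList))) tsA, tB],
        IsDeriv.lj ?_ ?_, rfl, ?_⟩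
      · rw [List.map_cons, List.map_cons, List.map_nil, hB2]
        exact LJRule.cut _
      · intro u hu
        simp at hu
        rcases hu with rfl | rfl
        · exact hA1'
        · exact hB1
      · refine good_node (fun j h => by cases h) ?_
        intro u hu
        simp at hu
        rcases hu with rfl | rfl
        · exact hA3'
        · exact hB3
  | bot sys hs hlen hconcl hts ih =>
      rename_i ctx s ts
      obtain ⟨ts', hf⟩ := choose_list
        (P := fun t' (p : DTree × TopRule) =>
          IsDeriv S (ctx ++ [p.2]) t' ∧ t'.concl = p.1.concl ∧ Good t')
        (ts.zip sys.tops) ih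
      have hlen' : ts'.length = sys.tops.length := by
        rw [hf.length_eq, List.length_zip, hlen, min_self]
      refine ⟨.node (.bot sys) s ts', IsDeriv.bot sys hs hlen' ?_ ?_, rfl, ?_⟩
      · intro u hu
        obtain ⟨p, hp, hP⟩ := forall₂_mem hf u hu
        rw [hP.2.1]
        exact hconcl p.1 (List.of_mem_zip (show (p.1, p.2) ∈ _ by simpa using hp)).1
      · have hz := forall₂_zip (Q := fun t r => IsDeriv S (ctx ++ [r]) t) (fun t p h => h.1) hf
        have e : (ts.zip sys.tops).map Prod.snd = sys.tops :=
          List.map_snd_zip (le_of_eq hlen.symm)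
        rw [e] at hz
        exact fun pr hpr => hz pr hpr
      · refine good_node (fun j h => by cases h) ?_
        intro u hu
        obtain ⟨p, _, hP⟩ := forall₂_mem hf u hu
        exact hP.2.2

/-- Lemma (normal form of 2-system derivations): any 2-system derivation can
be transformed into one, of the same end-sequent, in which two applications
of a top rule belonging to the same 2-system instance never occur on the
same path of the derivation tree.  (Along a single path of a correct
derivation, two top rule applications carry the same level tag `j` exactly
when they are applications of the same top rule belonging to the same
2-system instance.) -/
theorem no_two_top_rules_on_same_path (S : Set TwoSystem) (t : DTree)
    (h : IsDeriv S [] t) :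
    ∃ t' : DTree, IsDeriv S [] t' ∧ t'.concl = t.concl ∧
      ¬ ∃ (u : DTree) (j : ℕ), Subtree u t' ∧ u.lab = Lab.top j ∧
        ∃ c ∈ u.children, ∃ v : DTree, Subtree v c ∧ v.lab = Lab.top j := by
  obtain ⟨t', h1, h2, h3⟩ := main_transform h
  refine ⟨t', h1, h2, ?_⟩
  rintro ⟨u, j, hu, hlab, c, hc, v, hv, hvlab⟩
  exact h3 u j hu hlab c hc v hv j hvlab
end

section
/- Let (r) be an application of a context-sharing hypersequent rule with premisses G | C₁, …, G | Cₙ and conclusion G | H. For natural numbers d ≥ 0 and c ≥ 0, let 𝕃_d be the set of hypersequents G | (H)^c | (C₁)^{x₁} | … | (Cₙ)^{xₙ} with x₁ + … + xₙ = d, where (K)^u denotes u copies of K. Then for every natural number e with 0 ≤ e ≤ d, each hypersequent in 𝕃_{d−e} = { G | (H)^{c+e} | (C₁)^{x'₁} | … | (Cₙ)^{x'ₙ} : x'₁ + … + x'ₙ = d − e } is derivable from hypersequents in 𝕃_d by repeatedly applying only the rule (r). -/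
/-- `RDer Cs Hc base K` : the hypersequent `K` is derivable from hypersequents
in `base` by repeatedly applying only the (context-sharing, schematic in its
hypersequent context) rule (r) which, for any hypersequent context G',
infers G' | Hc from the premisses G' | C₁, …, G' | Cₙ (`Cs = [C₁,…,Cₙ]`,
and `Hc` is the multiset of active components of the conclusion). -/
inductive RDer (Cs : List Sequent) (Hc : Hyper) (base : Set Hyper) : Hyper → Prop
  | ofBase {K : Hyper} : K ∈ base → RDer Cs Hc base K
  | rule (G' : Hyper) :
      (∀ C ∈ Cs, RDer Cs Hc base (C ::ₘ G')) →
      RDer Cs Hc base (G' + Hc)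

/-- The set 𝕃 of hypersequents G | (Hc)^c | (C₁)^{x₁} | … | (Cₙ)^{xₙ}
with x₁ + … + xₙ = d, where (K)^u denotes u copies of K. -/
def Lset (G : Hyper) (Hc : Hyper) (Cs : List Sequent) (c d : ℕ) : Set Hyper :=
  {K | ∃ xs : List ℕ, xs.length = Cs.length ∧ xs.sum = d ∧
    K = G + c • Hc + (List.zipWith (fun x C => x • ({C} : Multiset Sequent)) xs Cs).sum}

lemma incr_lemma (C : Sequent) : ∀ (Cs : List Sequent), C ∈ Cs → ∀ xs : List ℕ,
    xs.length = Cs.length →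
    ∃ xs' : List ℕ, xs'.length = Cs.length ∧ xs'.sum = xs.sum + 1 ∧
      (List.zipWith (fun x C => x • ({C} : Multiset Sequent)) xs' Cs).sum
        = C ::ₘ (List.zipWith (fun x C => x • ({C} : Multiset Sequent)) xs Cs).sum := by
  intro Cs hC
  induction Cs with
  | nil => simp at hC
  | cons D Ds ih =>
    intro xs hlen
    cases xs with
    | nil => simp at hlen
    | cons x ys =>
      simp at hlen
      rcases List.mem_cons.1 hC with h | h
      · refine ⟨(x+1) :: ys, by simp [hlen], by simp [Nat.add_comm, Nat.add_assoc, Nat.add_left_comm], ?_⟩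
        subst h
        simp [succ_nsmul, ← Multiset.singleton_add]
        abel
      · obtain ⟨zs, hl, hs, hz⟩ := ih h ys hlen
        refine ⟨x :: zs, by simp [hl], by simp [hs]; omega, ?_⟩
        simp [hz, ← Multiset.singleton_add]
        abel

/-- Lemma: for any application of the rule (r) (with premisses G | C₁, …,
G | Cₙ and conclusion G | H) and any natural numbers d and c, for every
e ≤ d, each element of 𝕃_{d−e} (where H occurs c+e times) is derivable from
hypersequents in 𝕃_d (where H occurs c times) by repeatedly applying only
the rule (r). -/
theorem downwards_lemma (Cs : List Sequent) (Hc G : Hyper) (c d e : ℕ)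
    (he : e ≤ d) :
    ∀ K ∈ Lset G Hc Cs (c + e) (d - e), RDer Cs Hc (Lset G Hc Cs c d) K := by
  induction e with
  | zero =>
    intro K hK
    exact RDer.ofBase (by simpa using hK)
  | succ e ih =>
    intro K hK
    obtain ⟨xs, hlen, hsum, hKeq⟩ := hK
    set S := (List.zipWith (fun x C => x • ({C} : Multiset Sequent)) xs Cs).sum with hS
    have hKeq' : K = (G + (c + e) • Hc + S) + Hc := by
      rw [hKeq, ← add_assoc c e 1, succ_nsmul]
      abel
    rw [hKeq']
    apply RDer.rule
    intro C hCmem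
    obtain ⟨xs', hl', hs', hz'⟩ := incr_lemma C Cs hCmem xs hlen
    apply ih (Nat.le_of_succ_le he)
    refine ⟨xs', hl', ?_, ?_⟩
    · rw [hs', hsum]; omega
    · rw [hz', ← hS]
      simp only [← Multiset.singleton_add]
      abel
end

section
/- Let (r) be an application of a context-sharing hypersequent rule with premisses G | C₁, …, G | Cₙ and conclusion G | H, and suppose for each i = 1,…,n the hypersequent G | G'ᵢ | (Cᵢ)^{mᵢ} is given, where every component of G'ᵢ also occurs in G. Then the hypersequent G | G'' | (H)^q, where G'' = G'₁ | … | G'ₙ and q = (Σᵢ₌₁ⁿ (mᵢ − 1)) + 1, is derivable from G | G'₁ | (C₁)^{m₁}, …, G | G'ₙ | (Cₙ)^{mₙ} using only external weakening (EW) and the rule (r). -/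
/-- `EWRDer Cs Hc base K` : the hypersequent `K` is derivable from
hypersequents in `base` using only external weakening (EW) and the
(context-sharing, schematic in its hypersequent context) rule (r) which, for
any hypersequent context G', infers G' | Hc from G' | C₁, …, G' | Cₙ. -/
inductive EWRDer (Cs : List Sequent) (Hc : Hyper) (base : Set Hyper) : Hyper → Prop
  | ofBase {K : Hyper} : K ∈ base → EWRDer Cs Hc base K
  | ew {K : Hyper} (s : Sequent) : EWRDer Cs Hc base K → EWRDer Cs Hc base (s ::ₘ K)
  | rule (G' : Hyper) :
      (∀ C ∈ Cs, EWRDer Cs Hc base (C ::ₘ G')) →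
      EWRDer Cs Hc base (G' + Hc)

/-! ### Auxiliary lemmas -/

lemma EWRDer.addRight {Cs : List Sequent} {Hc : Hyper} {base : Set Hyper} {K : Hyper}
    (h : EWRDer Cs Hc base K) (D : Hyper) : EWRDer Cs Hc base (K + D) := by
  induction D using Multiset.induction with
  | empty => simpa using h
  | cons s D ih =>
    have e : K + (s ::ₘ D) = s ::ₘ (K + D) := by
      rw [Multiset.add_cons]
    rw [e]
    exact ih.ew s

lemma EWRDer.mono {Cs : List Sequent} {Hc : Hyper} {base : Set Hyper} {K K' : Hyper}
    (h : EWRDer Cs Hc base K) (hle : K ≤ K') : EWRDer Cs Hc base K' := by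
  obtain ⟨D, rfl⟩ := Multiset.le_iff_exists_add.mp hle
  exact h.addRight D

lemma sum_getD_eq_map_sum (l : List ℕ) (n : ℕ) (h : l.length = n) (f : ℕ → ℕ) :
    ∑ i : Fin n, f (l.getD i 0) = (l.map f).sum := by
  subst h
  induction l with
  | nil => simp
  | cons a l ih =>
    rw [List.length_cons, Fin.sum_univ_succ]
    simp only [Fin.val_zero, List.getD_cons_zero, Fin.val_succ, List.getD_cons_succ,
      List.map_cons, List.sum_cons]
    rw [ih]

lemma getD_mem_of_lt {α : Type*} (l : List α) (d : α) (i : ℕ) (h : i < l.length) :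
    l.getD i d ∈ l := by
  rw [List.getD_eq_getElem l d h]
  exact List.getElem_mem h

/-- A premiss obtained from the base by external weakening, in the case where
the current multiplicity `k i` satisfies `m i ≤ k i + 1`. -/
lemma prem_base (Cs : List Sequent) (Hc G : Hyper) (Gs : List Hyper) (ms : List ℕ)
    (hGs : Gs.length = Cs.length)
    (k : Fin Cs.length → ℕ) (i : Fin Cs.length) (R : Hyper)
    (hge : ms.getD i 0 ≤ k i + 1) :
    EWRDer Cs Hc
      {K | ∃ i : Fin Cs.length,
        K = G + Gs.getD i 0 + (ms.getD i 0) • ({Cs.get i} : Multiset Sequent)}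
      (Cs.get i ::ₘ (G + Gs.sum + (∑ j : Fin Cs.length, k j • ({Cs.get j} : Multiset Sequent)) + R)) := by
  refine EWRDer.mono (K := G + Gs.getD i 0 + (ms.getD i 0) • ({Cs.get i} : Multiset Sequent))
    (EWRDer.ofBase ⟨i, rfl⟩) ?_
  have h1 : (Gs.getD i 0 : Hyper) ≤ Gs.sum := by
    refine List.single_le_sum (fun x _ => ?_) _ ?_
    · exact Multiset.zero_le x
    · exact getD_mem_of_lt Gs 0 i (by omega)
  have h2 : (ms.getD i 0) • ({Cs.get i} : Multiset Sequent)
      ≤ (∑ j : Fin Cs.length, k j • ({Cs.get j} : Multiset Sequent)) + {Cs.get i} := by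
    obtain ⟨d, hd⟩ : ∃ d, k i + 1 = ms.getD i 0 + d := ⟨k i + 1 - ms.getD i 0, by omega⟩
    calc (ms.getD i 0) • ({Cs.get i} : Multiset Sequent)
        ≤ (k i + 1) • ({Cs.get i} : Multiset Sequent) := by
          rw [hd, add_nsmul]; exact le_add_right le_rfl
      _ = k i • ({Cs.get i} : Multiset Sequent) + {Cs.get i} := by rw [succ_nsmul]
      _ ≤ (∑ j : Fin Cs.length, k j • ({Cs.get j} : Multiset Sequent)) + {Cs.get i} := by
          refine add_le_add ?_ le_rfl
          exact Finset.single_le_sum (f := fun j => k j • ({Cs.get j} : Multiset Sequent))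
            (fun _ _ => Multiset.zero_le _) (Finset.mem_univ i)
  calc G + Gs.getD i 0 + (ms.getD i 0) • ({Cs.get i} : Multiset Sequent)
      ≤ (G + Gs.sum) + ((∑ j : Fin Cs.length, k j • ({Cs.get j} : Multiset Sequent)) + {Cs.get i}) :=
        add_le_add (add_le_add le_rfl h1) h2
    _ ≤ (G + Gs.sum) + ((∑ j : Fin Cs.length, k j • ({Cs.get j} : Multiset Sequent)) + {Cs.get i}) + R :=
        le_add_right le_rfl
    _ = Cs.get i ::ₘ (G + Gs.sum + (∑ j : Fin Cs.length, k j • ({Cs.get j} : Multiset Sequent)) + R) := by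
        rw [← Multiset.singleton_add]
        abel

lemma star_key (Cs : List Sequent) (Hc G : Hyper) (Gs : List Hyper) (ms : List ℕ)
    (hGs : Gs.length = Cs.length) :
    ∀ (L : ℕ) (k : Fin Cs.length → ℕ),
      (∀ i : Fin Cs.length, k i + 1 ≤ ms.getD i 0) →
      (∑ i : Fin Cs.length, (ms.getD i 0 - 1 - k i)) = L →
      EWRDer Cs Hc
        {K | ∃ i : Fin Cs.length,
          K = G + Gs.getD i 0 + (ms.getD i 0) • ({Cs.get i} : Multiset Sequent)}
        (G + Gs.sum + (∑ i : Fin Cs.length, k i • ({Cs.get i} : Multiset Sequent)) + (L + 1) • Hc) := by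
  intro L
  induction L with
  | zero =>
    intro k hk hsum
    have hall : ∀ i : Fin Cs.length, ms.getD i 0 ≤ k i + 1 := by
      intro i
      have h0 : ms.getD i 0 - 1 - k i = 0 :=
        Finset.sum_eq_zero_iff.mp hsum i (Finset.mem_univ i)
      have := hk i
      omega
    rw [zero_add, one_nsmul]
    refine EWRDer.rule _ ?_
    intro C hC
    obtain ⟨i, rfl⟩ := List.mem_iff_get.mp hC
    have := prem_base Cs Hc G Gs ms hGs k i 0 (hall i)
    simpa using this
  | succ L ih =>
    intro k hk hsum
    have hrw : (L + 1 + 1) • Hc = (L + 1) • Hc + Hc := succ_nsmul Hc (L + 1)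
    rw [hrw, ← add_assoc]
    refine EWRDer.rule _ ?_
    intro C hC
    obtain ⟨i, rfl⟩ := List.mem_iff_get.mp hC
    by_cases hge : ms.getD i 0 ≤ k i + 1
    · exact prem_base Cs Hc G Gs ms hGs k i ((L + 1) • Hc) hge
    · -- use the induction hypothesis with k updated at i
      push_neg at hge
      set k' := Function.update k i (k i + 1) with hk'def
      have hupd_sum : ∑ j : Fin Cs.length, k' j • ({Cs.get j} : Multiset Sequent)
          = (∑ j : Fin Cs.length, k j • ({Cs.get j} : Multiset Sequent)) + {Cs.get i} := by
        have hfun : ∀ j : Fin Cs.length, k' j • ({Cs.get j} : Multiset Sequent)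
            = k j • ({Cs.get j} : Multiset Sequent)
              + (if j = i then ({Cs.get i} : Multiset Sequent) else 0) := by
          intro j
          by_cases h : j = i
          · subst h; simp [hk'def, Function.update_self, succ_nsmul]
          · simp [hk'def, Function.update_of_ne h, h]
        rw [Finset.sum_congr rfl (fun j _ => hfun j), Finset.sum_add_distrib]
        simp
      have hk' : ∀ j : Fin Cs.length, k' j + 1 ≤ ms.getD j 0 := by
        intro j
        by_cases h : j = i
        · subst h; simp only [hk'def, Function.update_self]; omega
        · simp only [hk'def, Function.update_of_ne h]; exact hk j
      have hsum' : (∑ j : Fin Cs.length, (ms.getD j 0 - 1 - k' j)) = L := by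
        have hfun : ∀ j : Fin Cs.length, (ms.getD j 0 - 1 - k j)
            = (ms.getD j 0 - 1 - k' j) + (if j = i then 1 else 0) := by
          intro j
          by_cases h : j = i
          · subst h; simp only [hk'def, Function.update_self, eq_self_iff_true, if_true]; omega
          · simp only [hk'def, Function.update_of_ne h, h, if_false, add_zero]
        rw [Finset.sum_congr rfl (fun j _ => hfun j), Finset.sum_add_distrib] at hsum
        simp only [Finset.sum_ite_eq', Finset.mem_univ, if_true] at hsum
        omega
      have hder := ih k' hk' hsum'
      refine hder.mono (le_of_eq ?_)
      rw [hupd_sum, ← Multiset.singleton_add]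
      abel

/-- Claim (⋆) of the EC-elimination lemma: given an application of the rule
(r) with premisses G | C₁, …, G | Cₙ and conclusion G | H, and hypersequents
G | G'ᵢ | (Cᵢ)^{mᵢ} (i = 1,…,n) where every component of each G'ᵢ also
occurs in G and each mᵢ ≥ 1, the hypersequent G | G'' | (H)^q, with
G'' = G'₁ | … | G'ₙ and q = (Σᵢ (mᵢ − 1)) + 1, is derivable from the
hypersequents G | G'ᵢ | (Cᵢ)^{mᵢ} using only (EW) and (r). -/
theorem star_claim (Cs : List Sequent) (Hc G : Hyper)
    (Gs : List Hyper) (ms : List ℕ)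
    (hGs : Gs.length = Cs.length) (hms : ms.length = Cs.length)
    (hm1 : ∀ m ∈ ms, 1 ≤ m)
    (hsub : ∀ G' ∈ Gs, ∀ s ∈ G', s ∈ G) :
    EWRDer Cs Hc
      {K | ∃ i : Fin Cs.length,
        K = G + Gs.getD i 0 + (ms.getD i 0) • ({Cs.get i} : Multiset Sequent)}
      (G + Gs.sum + ((ms.map (fun m => m - 1)).sum + 1) • Hc) := by
  have hkey := star_key Cs Hc G Gs ms hGs ((ms.map (fun m => m - 1)).sum) (fun _ => 0)
    (fun i => hm1 _ (getD_mem_of_lt ms 0 i (by omega)))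
    (by
      rw [← sum_getD_eq_map_sum ms Cs.length hms (fun m => m - 1)]
      simp)
  simpa using hkey
end
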